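/- Let q be a prime power, n a positive integer, and for i = 1, ..., n let T_i ⊆ F_q^* be a nonempty set contained in a coset γ_i H_i of a multiplicative subgroup H_i of F_q^* of order d_i, and let S_i = F_q^* \ T_i with t_i = |T_i| ≤ d_i. Set P(X_1,...,X_n) = \prod_{i=1}^n \prod_{x ∈ S_i}(X_i - x). Then every monomial X_1^{v_1} ··· X_n^{v_n} occurring in P with nonzero coefficient satisfies, for each i = 1, ..., n, that v_i ∈ { j d_i, j d_i + 1, ..., j d_i + (d_i - t_i) } for some j ∈ {0, 1, ..., (q-1)/d_i - 1}. -/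

import Mathlib

open Polynomial in
lemma aux_coeff_comp_C_mul_X {F : Type*} [CommRing F] (p : F[X]) (c : F) (k : ℕ) :
    (p.comp (C c * X)).coeff k = c ^ k * p.coeff k := by
  induction p using Polynomial.induction_on' with
  | add p q hp hq => simp [add_comp, hp, hq, mul_add]
  | monomial n a =>
    rw [monomial_comp, mul_pow, ← C_pow]
    simp only [coeff_monomial, coeff_C_mul, coeff_X_pow, mul_ite, mul_zero, mul_one]
    rcases eq_or_ne n k with h | h
    · subst h; simp [mul_comm]
    · simp [h, Ne.symm h]

open Polynomial in
lemma aux_uni {F : Type*} [Field F] [Fintype F] [DecidableEq F] {q : ℕ}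
    (hq : Fintype.card F = q)
    (H : Subgroup Fˣ) {d : ℕ} (hd : Nat.card H = d) (γ : Fˣ) (T : Finset F)
    (hsub : ∀ x ∈ T, ∃ h ∈ H, x = ((γ * h : Fˣ) : F))
    {t : ℕ} (ht : t = T.card) (htd : t ≤ d) (k : ℕ)
    (hk : k ∈ (∏ x ∈ Finset.univ.filter (· ≠ (0:F)) \ T, (X - C x)).support) :
    ∃ j < (q - 1) / d, j * d ≤ k ∧ k ≤ j * d + (d - t) := by
  classical
  haveI : Fintype H := Fintype.ofFinite H
  have hd0 : 0 < d := hd ▸ Nat.card_pos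
  have hq1 : Fintype.card Fˣ = q - 1 := by rw [Fintype.card_units, hq]
  have hq1pos : 0 < q - 1 := by
    rw [← hq1]; exact Fintype.card_pos
  have hdq : d ≤ q - 1 := by
    rw [← hd, ← hq1, ← Nat.card_eq_fintype_card]
    exact Nat.le_of_dvd (by rw [Nat.card_eq_fintype_card, hq1]; exact hq1pos)
      (Subgroup.card_subgroup_dvd_card H)
  set G : Finset F := Finset.image (fun h : H => ((γ * h : Fˣ) : F)) Finset.univ with hGdef
  have hmemG : ∀ x : F, x ∈ G ↔ ∃ h : Fˣ, h ∈ H ∧ ((γ * h : Fˣ) : F) = x := by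
    intro x
    simp only [hGdef, Finset.mem_image, Finset.mem_univ, true_and]
    constructor
    · rintro ⟨h, rfl⟩; exact ⟨h, h.2, rfl⟩
    · rintro ⟨h, hh, rfl⟩; exact ⟨⟨h, hh⟩, rfl⟩
  have hGcard : G.card = d := by
    rw [hGdef, Finset.card_image_of_injective _ ?_, Finset.card_univ,
      ← Nat.card_eq_fintype_card, hd]
    intro a b hab
    have : (γ * a : Fˣ) = γ * b := Units.ext hab
    exact Subtype.ext (mul_left_cancel this)
  have hTG : T ⊆ G := by
    intro x hx
    obtain ⟨h, hh, rfl⟩ := hsub x hx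
    exact (hmemG _).2 ⟨h, hh, rfl⟩
  set N : Finset F := Finset.univ.filter (· ≠ (0:F)) with hNdef
  have hmemN : ∀ x : F, x ∈ N ↔ x ≠ 0 := by
    intro x; simp [hNdef]
  have hNcard : N.card = q - 1 := by
    rw [hNdef, Finset.filter_ne', Finset.card_erase_of_mem (Finset.mem_univ _),
      Finset.card_univ, hq]
  have hGN : G ⊆ N := by
    intro x hx
    obtain ⟨h, _, rfl⟩ := (hmemG x).1 hx
    exact (hmemN _).2 (Units.ne_zero _)
  have hsplit : N \ T = (N \ G) ∪ (G \ T) := by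
    ext x
    simp only [Finset.mem_sdiff, Finset.mem_union]
    constructor
    · rintro ⟨h1, h2⟩
      by_cases hg : x ∈ G
      · exact Or.inr ⟨hg, h2⟩
      · exact Or.inl ⟨h1, hg⟩
    · rintro (⟨h1, h2⟩ | ⟨h1, h2⟩)
      · exact ⟨h1, fun hx => h2 (hTG hx)⟩
      · exact ⟨hGN h1, h2⟩
  have hdisj : Disjoint (N \ G) (G \ T) := by
    rw [Finset.disjoint_left]
    intro x hx hx'
    exact (Finset.mem_sdiff.1 hx).2 (Finset.mem_sdiff.1 hx').1
  set A : F[X] := ∏ x ∈ N \ G, (X - C x) with hAdef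
  set B : F[X] := ∏ x ∈ G \ T, (X - C x) with hBdef
  rw [hsplit, Finset.prod_union hdisj] at hk
  have hAdeg : A.natDegree = q - 1 - d := by
    rw [hAdef, Polynomial.natDegree_prod _ _ (fun x _ => X_sub_C_ne_zero x)]
    simp [Finset.card_sdiff_of_subset hGN, hNcard, hGcard]
  have hBdeg : B.natDegree = d - t := by
    rw [hBdef, Polynomial.natDegree_prod _ _ (fun x _ => X_sub_C_ne_zero x)]
    simp [Finset.card_sdiff_of_subset hTG, hGcard, ht]
  -- extract a + b = k with nonzero coefficients
  have hcoeff : (A * B).coeff k ≠ 0 := Polynomial.mem_support_iff.1 hk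
  rw [Polynomial.coeff_mul] at hcoeff
  obtain ⟨⟨a, b⟩, hab, hne⟩ := Finset.exists_ne_zero_of_sum_ne_zero hcoeff
  have habk : a + b = k := Finset.HasAntidiagonal.mem_antidiagonal.1 hab
  have hA0 : A.coeff a ≠ 0 := left_ne_zero_of_mul hne
  have hB0 : B.coeff b ≠ 0 := right_ne_zero_of_mul hne
  have hale : a ≤ q - 1 - d := hAdeg ▸ Polynomial.le_natDegree_of_ne_zero hA0
  have hble : b ≤ d - t := hBdeg ▸ Polynomial.le_natDegree_of_ne_zero hB0
  -- the generator of H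
  obtain ⟨ζ₀, hgen⟩ := IsCyclic.exists_generator (α := H)
  have hord₀ : orderOf ζ₀ = d := by
    rw [orderOf_eq_card_of_forall_mem_zpowers hgen]
    exact hd
  set ζ : Fˣ := (ζ₀ : Fˣ) with hζdef
  have hordζ : orderOf ζ = d := by
    rw [← hord₀]
    exact orderOf_injective H.subtype H.subtype_injective ζ₀
  set c : F := (ζ : F) with hcdef
  have hc0 : c ≠ 0 := Units.ne_zero ζ
  have hcd : c ^ d = 1 := by
    have : ζ ^ d = 1 := by rw [← hordζ]; exact pow_orderOf_eq_one ζ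
    calc c ^ d = ((ζ ^ d : Fˣ) : F) := by rw [Units.val_pow_eq_pow_val]
    _ = 1 := by rw [this]; rfl
  have hcq : c ^ (q - 1) = 1 := by
    have : ζ ^ (q - 1) = 1 := by rw [← hq1]; exact pow_card_eq_one
    calc c ^ (q - 1) = ((ζ ^ (q - 1) : Fˣ) : F) := by rw [Units.val_pow_eq_pow_val]
    _ = 1 := by rw [this]; rfl
  have hcR : c ^ (q - 1 - d) = 1 := by
    have h1 : c ^ (q - 1 - d) * c ^ d = 1 := by
      rw [← pow_add, Nat.sub_add_cancel hdq, hcq]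
    rwa [hcd, mul_one] at h1
  -- closure of N \ G under multiplication by elements of H
  have hclosed : ∀ u : Fˣ, u ∈ H → ∀ x : F, x ∈ N \ G → x * (u : F) ∈ N \ G := by
    intro u hu x hx
    rw [Finset.mem_sdiff] at hx ⊢
    obtain ⟨hxN, hxG⟩ := hx
    refine ⟨(hmemN _).2 (mul_ne_zero ((hmemN _).1 hxN) (Units.ne_zero u)), ?_⟩
    intro hcon
    obtain ⟨h, hh, heq⟩ := (hmemG _).1 hcon
    apply hxG
    refine (hmemG _).2 ⟨h * u⁻¹, mul_mem hh (inv_mem hu), ?_⟩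
    have : x = ((γ * h : Fˣ) : F) * ((u⁻¹ : Fˣ) : F) := by
      rw [heq, mul_assoc, ← Units.val_mul, mul_inv_cancel, Units.val_one, mul_one]
    rw [this, ← Units.val_mul, mul_assoc]
  -- invariance of A under X ↦ cX
  have himg : (N \ G).image (fun x => x * ((ζ⁻¹ : Fˣ) : F)) = N \ G := by
    apply Finset.Subset.antisymm
    · intro y hy
      obtain ⟨x, hx, rfl⟩ := Finset.mem_image.1 hy
      exact hclosed ζ⁻¹ (inv_mem (hgen ζ₀ |> fun _ => ζ₀.2)) x hx
    · intro y hy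
      refine Finset.mem_image.2 ⟨y * c, hclosed ζ ζ₀.2 y hy, ?_⟩
      rw [mul_assoc, hcdef, ← Units.val_mul, mul_inv_cancel, Units.val_one, mul_one]
  have hAcomp : A.comp (C c * X) = A := by
    have h1 : A.comp (C c * X) = ∏ x ∈ N \ G, (C c * X - C x) := by
      rw [hAdef]
      simp only [Polynomial.comp, Polynomial.eval₂_finset_prod, eval₂_sub, eval₂_X, eval₂_C]
    have h2 : ∀ x : F, C c * X - C x = C c * (X - C (x * ((ζ⁻¹ : Fˣ) : F))) := by
      intro x
      rw [mul_sub, ← C_mul]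
      congr 2
      symm
      rw [mul_comm, mul_assoc, ← Units.val_mul, inv_mul_cancel, Units.val_one, mul_one]
    rw [h1]
    simp only [h2]
    rw [Finset.prod_mul_distrib, Finset.prod_const]
    rw [← Finset.prod_image (f := fun y => X - C y)
      (fun x _ y _ hxy => mul_right_cancel₀ (Units.ne_zero _) hxy), himg,
      Finset.card_sdiff_of_subset hGN, hNcard, hGcard, ← C_pow, hcR, map_one, one_mul, hAdef]
  have hdvd : d ∣ a := by
    have hEq := aux_coeff_comp_C_mul_X A c a
    rw [hAcomp] at hEq
    have hca : c ^ a = 1 := by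
      by_contra hne'
      have h0 : (c ^ a - 1) * A.coeff a = 0 := by linear_combination -hEq
      rcases mul_eq_zero.1 h0 with h | h
      · exact hne' (sub_eq_zero.1 h)
      · exact hA0 h
    have hζa : ζ ^ a = 1 := by
      apply Units.ext
      rw [Units.val_pow_eq_pow_val, ← hcdef, hca, Units.val_one]
    rw [← hordζ]
    exact orderOf_dvd_of_pow_eq_one hζa
  obtain ⟨j, rfl⟩ := hdvd
  refine ⟨j, ?_, ?_, ?_⟩
  · have h1 : (j + 1) * d ≤ q - 1 := by
      have h2 : d * j + d ≤ q - 1 := by omega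
      calc (j + 1) * d = d * j + d := by ring
        _ ≤ q - 1 := h2
    exact (Nat.le_div_iff_mul_le hd0).2 h1
  · rw [mul_comm]; omega
  · rw [mul_comm]; omega


lemma aux_support_aeval_X {F : Type*} [CommSemiring F] {n : Type*} (i : n) (p : Polynomial F)
    (u : (n →₀ ℕ)) (hu : u ∈ (Polynomial.aeval (MvPolynomial.X i : MvPolynomial n F) p).support) :
    ∃ k ∈ p.support, u = Finsupp.single i k := by
  classical
  have h0 : (Polynomial.aeval (MvPolynomial.X i : MvPolynomial n F) p)
      = ∑ k ∈ p.support, MvPolynomial.monomial (Finsupp.single i k) (p.coeff k) := by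
    rw [Polynomial.aeval_def, Polynomial.eval₂_eq_sum, Polynomial.sum]
    refine Finset.sum_congr rfl fun k _ => ?_
    rw [MvPolynomial.algebraMap_eq, MvPolynomial.X_pow_eq_monomial,
      MvPolynomial.C_mul_monomial, mul_one]
  rw [h0] at hu
  have hne : MvPolynomial.coeff u
      (∑ k ∈ p.support, MvPolynomial.monomial (Finsupp.single i k) (p.coeff k)) ≠ 0 :=
    MvPolynomial.mem_support_iff.1 hu
  rw [MvPolynomial.coeff_sum] at hne
  obtain ⟨k, hk, hk0⟩ := Finset.exists_ne_zero_of_sum_ne_zero hne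
  rw [MvPolynomial.coeff_monomial] at hk0
  refine ⟨k, hk, ?_⟩
  by_contra h
  exact hk0 (if_neg (fun h' => h h'.symm))

lemma aux_support_prod {F : Type*} [CommSemiring F] {n : Type*} [DecidableEq n]
    (f : n → Polynomial F) (s : Finset n) :
    ∀ e ∈ (∏ i ∈ s, Polynomial.aeval (MvPolynomial.X i : MvPolynomial n F) (f i)).support,
      (∀ i ∈ s, e i ∈ (f i).support) ∧ ∀ i ∉ s, e i = 0 := by
  classical
  induction s using Finset.induction_on with
  | empty =>
    intro e he
    rw [Finset.prod_empty] at he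
    have : e = 0 := by
      have := MvPolynomial.mem_support_iff.1 he
      rw [MvPolynomial.coeff_one] at this
      by_contra h
      exact this (if_neg (fun h' => h h'.symm))
    subst this
    exact ⟨fun i hi => absurd hi (Finset.notMem_empty i), fun i _ => rfl⟩
  | @insert a s ha ih =>
    intro e he
    rw [Finset.prod_insert ha] at he
    have hsub := MvPolynomial.support_mul _ _ he
    obtain ⟨u, hu, v, hv, huv⟩ := Finset.mem_add.1 hsub
    obtain ⟨k, hk, rfl⟩ := aux_support_aeval_X a (f a) u hu
    obtain ⟨h1, h2⟩ := ih v hv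
    constructor
    · intro i hi
      rcases Finset.mem_insert.1 hi with rfl | hi'
      · have : e i = k := by
          rw [← huv, Finsupp.add_apply, Finsupp.single_eq_same, h2 i ha, add_zero]
        rwa [this]
      · have hia : i ≠ a := fun h => ha (h ▸ hi')
        have : e i = v i := by
          rw [← huv, Finsupp.add_apply, Finsupp.single_eq_of_ne' (Ne.symm hia), zero_add]
        rw [this]; exact h1 i hi'
    · intro i hi
      have hia : i ≠ a := fun h => hi (h ▸ Finset.mem_insert_self a s)
      have his : i ∉ s := fun h => hi (Finset.mem_insert_of_mem h)
      rw [← huv, Finsupp.add_apply, Finsupp.single_eq_of_ne' (Ne.symm hia), h2 i his, add_zero]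


/-- **Containment of the support in `W` (from the proof of Theorem 4).** For
`i = 1,…,n` let `T_i ⊆ F_q^*` be a nonempty set contained in a coset `γ_i H_i` of a
multiplicative subgroup `H_i ≤ F_q^*` of order `d_i`, let `S_i = F_q^* \ T_i` and
`t_i = |T_i| ≤ d_i`, and set `P = ∏_{i=1}^n ∏_{x ∈ S_i}(X_i - x)`. Then every monomial
`X_1^{v_1} ⋯ X_n^{v_n}` occurring in `P` with nonzero coefficient satisfies, for each `i`,
`v_i ∈ {j d_i, j d_i + 1, …, j d_i + (d_i - t_i)}` for some `j ∈ {0,…,(q-1)/d_i - 1}`. -/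
theorem support_subset_W
    {F : Type*} [Field F] [Fintype F] [DecidableEq F] {q n : ℕ}
    (hq : Fintype.card F = q) (hn : 0 < n)
    (T : Fin n → Finset F) (hT0 : ∀ i, (0 : F) ∉ T i) (hTne : ∀ i, (T i).Nonempty)
    (H : Fin n → Subgroup Fˣ) (d : Fin n → ℕ) (hd : ∀ i, Nat.card (H i) = d i)
    (γ : Fin n → Fˣ)
    (hsub : ∀ i, ∀ x ∈ T i, ∃ h ∈ H i, x = ((γ i * h : Fˣ) : F))
    (S : Fin n → Finset F) (hS : ∀ i, S i = Finset.univ.filter (· ≠ (0 : F)) \ T i)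
    (t : Fin n → ℕ) (ht : ∀ i, t i = (T i).card) (htd : ∀ i, t i ≤ d i)
    (P : MvPolynomial (Fin n) F)
    (hP : P = ∏ i, ∏ x ∈ S i, (MvPolynomial.X i - MvPolynomial.C x)) :
    ∀ e ∈ P.support, ∀ i, ∃ j < (q - 1) / d i,
      j * d i ≤ e i ∧ e i ≤ j * d i + (d i - t i) := by
  intro e he i
  set f : Fin n → Polynomial F := fun i => ∏ x ∈ S i, (Polynomial.X - Polynomial.C x) with hf
  have hPf : P = ∏ i, Polynomial.aeval (MvPolynomial.X i : MvPolynomial (Fin n) F) (f i) := by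
    rw [hP]
    refine Finset.prod_congr rfl fun i _ => ?_
    rw [hf, map_prod]
    refine (Finset.prod_congr rfl fun x _ => ?_).symm
    rw [map_sub, Polynomial.aeval_X, Polynomial.aeval_C, MvPolynomial.algebraMap_eq]
  rw [hPf] at he
  have hei : e i ∈ (f i).support :=
    (aux_support_prod f Finset.univ e he).1 i (Finset.mem_univ i)
  simp only [hf] at hei
  rw [hS i] at hei
  exact aux_uni hq (H i) (hd i) (γ i) (T i) (hsub i) (ht i) (htd i) (e i) hei
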